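/- Let k ∈ ℕ with k ≥ 1, and let ζ ∈ ℂ with Re(ζ) > exp^∘k(0). Then the iterated principal logarithms L₁(ζ), …, L_k(ζ) are all well defined, and |L_m(ζ)| ≥ log^∘m(Re(ζ)) for every m with 1 ≤ m ≤ k. -/

import Mathlib

open Filter Set

theorem iterated_complex_log_abs_lower_bound
    (k : ℕ) (hk : 1 ≤ k) (ζ : ℂ) (hζ : Real.exp^[k] 0 < ζ.re) :
    (∀ m < k, 0 < (Complex.log^[m] ζ).re) ∧
    (∀ m, 1 ≤ m → m ≤ k → Real.log^[m] ζ.re ≤ ‖Complex.log^[m] ζ‖) := by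
  have aux : ∀ m, m ≤ k → Real.exp^[k - m] 0 < Real.log^[m] ζ.re ∧
      Real.log^[m] ζ.re ≤ (Complex.log^[m] ζ).re := by
    intro m
    induction m with
    | zero => intro _; simpa using hζ
    | succ m ih =>
      intro hmk
      have hm : m ≤ k := Nat.le_of_succ_le hmk
      obtain ⟨hr, hz⟩ := ih hm
      have hksub : k - m = (k - (m + 1)) + 1 := by omega
      rw [hksub, Function.iterate_succ_apply'] at hr
      set e := Real.exp^[k - (m + 1)] 0 with he
      have hpos : 0 < Real.log^[m] ζ.re := (Real.exp_pos e).trans hr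
      have hre : 0 < (Complex.log^[m] ζ).re := hpos.trans_le hz
      have habs : (Complex.log^[m] ζ).re ≤ ‖Complex.log^[m] ζ‖ :=
        Complex.re_le_norm _
      constructor
      · rw [Function.iterate_succ_apply']
        have := Real.log_lt_log (Real.exp_pos e) hr
        rwa [Real.log_exp] at this
      · rw [Function.iterate_succ_apply', Function.iterate_succ_apply', Complex.log_re]
        exact Real.log_le_log hpos (hz.trans habs)
  constructor
  · intro m hm
    obtain ⟨hr, hz⟩ := aux m hm.le
    have : 0 < Real.exp^[k - m] 0 := by
      have : k - m = (k - m - 1) + 1 := by omega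
      rw [this, Function.iterate_succ_apply']
      exact Real.exp_pos _
    linarith
  · intro m _ hmk
    obtain ⟨hr, hz⟩ := aux m hmk
    exact hz.trans (Complex.re_le_norm _)
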